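/- For every natural number n, as an identity of real numbers, b_n = (n!/√3) · ((1+√3)^{n+1} − (1−√3)^{n+1}) / 2^{n+1}. -/

import Mathlib

/-- A barred permutation of `[n]`: an ordered set partition of `Fin n` into
blocks of size 1 or 2, encoded as a list of pairwise disjoint subsets whose
union is everything. -/
def IsBarredPermutation {n : ℕ} (L : List (Finset (Fin n))) : Prop :=
  L.Pairwise Disjoint ∧ (∀ B ∈ L, B.card = 1 ∨ B.card = 2) ∧
    L.foldr (· ∪ ·) ∅ = Finset.univ

/-- `barredCount n` is the number of barred permutations of `[n]`. -/
noncomputable def barredCount (n : ℕ) : ℕ :=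
  Nat.card { L : List (Finset (Fin n)) // IsBarredPermutation L }

open Finset

section BP
variable {α : Type*} [DecidableEq α]

def BP (s : Finset α) (L : List (Finset α)) : Prop :=
  L.Pairwise Disjoint ∧ (∀ B ∈ L, B.card = 1 ∨ B.card = 2) ∧
    L.foldr (· ∪ ·) ∅ = s

lemma mem_subset_foldr {L : List (Finset α)} {B : Finset α} (hB : B ∈ L) :
    B ⊆ L.foldr (· ∪ ·) ∅ := by
  induction L with
  | nil => simp at hB
  | cons C T ih =>
    rcases List.mem_cons.mp hB with h | h
    · subst h; exact subset_union_left
    · exact (ih h).trans subset_union_right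

lemma disjoint_foldr {B : Finset α} {T : List (Finset α)}
    (h : ∀ C ∈ T, Disjoint B C) : Disjoint B (T.foldr (· ∪ ·) ∅) := by
  induction T with
  | nil => simp
  | cons C T ih =>
    simp only [List.foldr_cons, disjoint_union_right]
    exact ⟨h C (by simp), ih fun D hD => h D (List.mem_cons_of_mem _ hD)⟩

lemma BP.nodup {s : Finset α} {L : List (Finset α)} (h : BP s L) : L.Nodup := by
  refine h.1.imp_of_mem fun {B C} hB _ hd => ?_
  rintro rfl
  rcases h.2.1 B hB with h1 | h1 <;> simp [disjoint_self.mp hd] at h1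

noncomputable instance bpFinite [Fintype α] (s : Finset α) :
    Finite {L : List (Finset α) // BP s L} :=
  Finite.of_injective (fun L => (⟨L.1, L.2.nodup⟩ : {l : List (Finset α) // l.Nodup}))
    (fun L M h => Subtype.ext (by simpa using congrArg Subtype.val h))

noncomputable def bpCount [Fintype α] (s : Finset α) : ℕ :=
  Nat.card {L : List (Finset α) // BP s L}

lemma bpCount_empty [Fintype α] : bpCount (∅ : Finset α) = 1 := by
  have hu : ∀ L : List (Finset α), BP ∅ L → L = [] := by
    intro L hL
    cases L with
    | nil => rfl
    | cons B T =>
      exfalso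
      have : B ∪ T.foldr (· ∪ ·) ∅ = ∅ := hL.2.2
      have hB : B = ∅ := by
        have := union_eq_empty.mp this
        exact this.1
      rcases hL.2.1 B (by simp) with h | h <;> simp [hB] at h
  have : Unique {L : List (Finset α) // BP ∅ L} := by
    refine ⟨⟨⟨[], ?_⟩⟩, ?_⟩
    · exact ⟨by simp, by simp, rfl⟩
    · rintro ⟨L, hL⟩; exact Subtype.ext (hu L hL)
  simpa [bpCount] using Nat.card_unique
end BP

section Rec
variable {α : Type*} [DecidableEq α] [Fintype α]

def consMap (s : Finset α) :
    (Σ B : {B : Finset α // B ∈ s.powersetCard 1 ∪ s.powersetCard 2},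
      {L : List (Finset α) // BP (s \ B.1) L}) → {L : List (Finset α) // BP s L} := by
  rintro ⟨⟨B, hB⟩, ⟨L, hL⟩⟩
  refine ⟨B :: L, ?_, ?_, ?_⟩
  · refine List.pairwise_cons.mpr ⟨fun C hC => ?_, hL.1⟩
    have hCs : C ⊆ s \ B := (mem_subset_foldr hC).trans (le_of_eq hL.2.2)
    exact Finset.disjoint_sdiff.mono_right hCs
  · intro C hC
    rcases List.mem_cons.mp hC with h | h
    · subst h
      rcases mem_union.mp hB with h | h
      · exact Or.inl (mem_powersetCard.mp h).2
      · exact Or.inr (mem_powersetCard.mp h).2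
    · exact hL.2.1 C h
  · have hBs : B ⊆ s := by
      rcases mem_union.mp hB with h | h
      · exact (mem_powersetCard.mp h).1
      · exact (mem_powersetCard.mp h).1
    simp only [List.foldr_cons, hL.2.2]
    exact union_sdiff_of_subset hBs

lemma consMap_bijective (s : Finset α) (hs : s.Nonempty) :
    Function.Bijective (consMap s) := by
  constructor
  · rintro ⟨⟨B, hB⟩, ⟨L, hL⟩⟩ ⟨⟨B', hB'⟩, ⟨L', hL'⟩⟩ h
    have h' : B :: L = B' :: L' := congrArg Subtype.val h
    obtain ⟨rfl, rfl⟩ : B = B' ∧ L = L' := by simpa using h'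
    rfl
  · rintro ⟨L, hL⟩
    cases L with
    | nil =>
      exfalso
      have : (∅ : Finset α) = s := hL.2.2
      exact hs.ne_empty this.symm
    | cons B T =>
      have hBs : B ⊆ s := by
        have := mem_subset_foldr (List.mem_cons_self : B ∈ B :: T)
        rwa [hL.2.2] at this
      have hBmem : B ∈ s.powersetCard 1 ∪ s.powersetCard 2 := by
        rcases hL.2.1 B (by simp) with h | h
        · exact mem_union_left _ (mem_powersetCard.mpr ⟨hBs, h⟩)
        · exact mem_union_right _ (mem_powersetCard.mpr ⟨hBs, h⟩)
      have hdisj : Disjoint B (T.foldr (· ∪ ·) ∅) :=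
        disjoint_foldr (List.pairwise_cons.mp hL.1).1
      have hfold : T.foldr (· ∪ ·) ∅ = s \ B := by
        have hs' : B ∪ T.foldr (· ∪ ·) ∅ = s := hL.2.2
        rw [← hs', union_sdiff_cancel_left hdisj]
      refine ⟨⟨⟨B, hBmem⟩, ⟨T, ?_, ?_, hfold⟩⟩, rfl⟩
      · exact (List.pairwise_cons.mp hL.1).2
      · exact fun C hC => hL.2.1 C (List.mem_cons_of_mem _ hC)

lemma bpCount_rec (s : Finset α) (hs : s.Nonempty) :
    bpCount s = ∑ B ∈ s.powersetCard 1 ∪ s.powersetCard 2, bpCount (s \ B) := by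
  classical
  have e := Equiv.ofBijective _ (consMap_bijective s hs)
  rw [bpCount, ← Nat.card_congr e]
  haveI : ∀ B : {B : Finset α // B ∈ s.powersetCard 1 ∪ s.powersetCard 2},
      Fintype {L : List (Finset α) // BP (s \ B.1) L} := fun B => Fintype.ofFinite _
  rw [Nat.card_eq_fintype_card, Fintype.card_sigma]
  rw [← Finset.sum_coe_sort (s.powersetCard 1 ∪ s.powersetCard 2) (fun B => bpCount (s \ B))]
  congr 1
  ext B
  rw [bpCount, Nat.card_eq_fintype_card]
end Rec

def c : ℕ → ℕ
  | 0 => 1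
  | (n+1) => (n+1) * c n + (n+1).choose 2 * c (n-1)

lemma powersetCard_disj (s : Finset α') [DecidableEq α'] :
    Disjoint (s.powersetCard 1) (s.powersetCard 2) := by
  rw [Finset.disjoint_left]
  intro B h1 h2
  have := (Finset.mem_powersetCard.mp h1).2
  have := (Finset.mem_powersetCard.mp h2).2
  omega

lemma bpCount_eq_c {α : Type*} [DecidableEq α] [Fintype α] :
    ∀ n : ℕ, ∀ s : Finset α, s.card = n → bpCount s = c n := by
  intro n
  induction n using Nat.strong_induction_on with
  | _ n ih =>
    intro s hcard
    match n with
    | 0 =>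
      obtain rfl : s = ∅ := card_eq_zero.mp hcard
      rw [bpCount_empty, c]
    | (m+1) =>
      have hs : s.Nonempty := card_pos.mp (by omega)
      rw [bpCount_rec s hs, Finset.sum_union (powersetCard_disj s)]
      have h1 : ∑ B ∈ s.powersetCard 1, bpCount (s \ B) = (m+1) * c m := by
        rw [Finset.sum_congr rfl (fun B hB => ?_), Finset.sum_const, card_powersetCard,
          hcard, Nat.choose_one_right, smul_eq_mul]
        obtain ⟨hBs, hB1⟩ := mem_powersetCard.mp hB
        exact ih m (by omega) _ (by rw [card_sdiff_of_subset hBs, hcard, hB1]; omega)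
      have h2 : ∑ B ∈ s.powersetCard 2, bpCount (s \ B) = (m+1).choose 2 * c (m-1) := by
        rcases Nat.eq_zero_or_pos m with rfl | hm
        · have : s.powersetCard 2 = ∅ := powersetCard_eq_empty.mpr (by omega)
          simp [this]
        · rw [Finset.sum_congr rfl (fun B hB => ?_), Finset.sum_const, card_powersetCard,
            hcard, smul_eq_mul]
          obtain ⟨hBs, hB2⟩ := mem_powersetCard.mp hB
          exact ih (m-1) (by omega) _ (by rw [card_sdiff_of_subset hBs, hcard, hB2]; omega)
      rw [h1, h2, c]

lemma barredCount_eq_c (n : ℕ) : barredCount n = c n := by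
  have : barredCount n = bpCount (Finset.univ : Finset (Fin n)) := rfl
  rw [this, bpCount_eq_c n Finset.univ (by simp)]

lemma choose_two_cast (n : ℕ) : (((n+2).choose 2 : ℕ) : ℝ) = (n+2) * (n+1) / 2 := by
  have h : (n+2).choose 2 * 2 = (n+2) * (n+1) := by
    have he : 2 ∣ (n+2) * (n+1) := by
      have h := Nat.even_mul_succ_self (n+1)
      rw [Nat.mul_comm] at h
      exact h.two_dvd
    rw [Nat.choose_two_right, show n+2-1 = n+1 from rfl, Nat.div_mul_cancel he]
  field_simp
  exact_mod_cast h

lemma c_real (n : ℕ) : (c n : ℝ) =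
    ((n.factorial : ℝ) / Real.sqrt 3) *
      (((1 + Real.sqrt 3) ^ (n + 1) - (1 - Real.sqrt 3) ^ (n + 1)) / 2 ^ (n + 1)) := by
  have h3 : Real.sqrt 3 * Real.sqrt 3 = 3 := Real.mul_self_sqrt (by norm_num)
  have hs : Real.sqrt 3 ≠ 0 := by positivity
  induction n using Nat.twoStepInduction with
  | zero =>
    simp only [c, Nat.factorial]
    field_simp
    ring
  | one =>
    simp only [c, Nat.factorial]
    push_cast
    field_simp
    ring_nf
    norm_num [Nat.choose]
  | more n ih1 ih2 =>
    set s := Real.sqrt 3 with hsdef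
    have key : (c (n+2) : ℝ) = (n+2) * c (n+1) + ((n+2).choose 2 : ℕ) * c n := by
      rw [show c (n+2) = (n+2) * c (n+1) + (n+2).choose 2 * c n by rw [c]; norm_num]
      push_cast
      ring
    rw [key, ih2, ih1, choose_two_cast]
    have hx : (1+s)^(n+3) = (1+s)^(n+1) * (4 + 2*s) := by
      rw [show n+3 = n+1+2 from rfl, pow_add]
      have : (1+s)^2 = 4+2*s := by rw [sq]; nlinarith [h3]
      rw [this]
    have hy : (1-s)^(n+3) = (1-s)^(n+1) * (4 - 2*s) := by
      rw [show n+3 = n+1+2 from rfl, pow_add]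
      have : (1-s)^2 = 4-2*s := by rw [sq]; nlinarith [h3]
      rw [this]
    have hx1 : (1+s)^(n+2) = (1+s)^(n+1) * (1+s) := pow_succ _ _
    have hy1 : (1-s)^(n+2) = (1-s)^(n+1) * (1-s) := pow_succ _ _
    rw [show n+2+1 = n+3 from rfl, hx, hy, hx1, hy1]
    have hfac : ((n+2).factorial : ℝ) = (n+2) * ((n+1) * n.factorial) := by
      rw [Nat.factorial_succ, Nat.factorial_succ]; push_cast; ring
    have hfac1 : ((n+1).factorial : ℝ) = (n+1) * n.factorial := by
      rw [Nat.factorial_succ]; push_cast; ring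
    rw [hfac, hfac1]
    have h2 : (2:ℝ)^(n+3) = 2^(n+1) * 4 := by rw [show n+3 = n+1+2 from rfl, pow_add]; norm_num
    have h2' : (2:ℝ)^(n+2) = 2^(n+1) * 2 := by rw [pow_succ]
    rw [h2, h2']
    have hp : (2:ℝ)^(n+1) ≠ 0 := by positivity
    field_simp
    ring

/-- Binet-type formula:
`b_n = (n!/√3) · ((1+√3)^{n+1} − (1−√3)^{n+1}) / 2^{n+1}` as real numbers. -/
theorem barredCount_binet (n : ℕ) :
    (barredCount n : ℝ) =
      ((n.factorial : ℝ) / Real.sqrt 3) *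
        (((1 + Real.sqrt 3) ^ (n + 1) - (1 - Real.sqrt 3) ^ (n + 1)) / 2 ^ (n + 1)) := by
  rw [barredCount_eq_c, c_real]
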